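/- For the upper-triangular truncation $\mathcal{U}$ on $n\times n$ real matrices, there holds $\|\mathcal{U}(M)\|_2 \le (\lceil \log_2 n \rceil + 1)\|M\|_2$ for all $M \in \mathbb{R}^{n\times n}$, where $\|\cdot\|_2$ is the spectral (operator) norm. -/

import Mathlib

open Matrix Finset

/-- The spectral (ℓ²-operator) norm of a real matrix. -/
noncomputable def specNorm {m n : ℕ} (M : Matrix (Fin m) (Fin n) ℝ) : ℝ :=
  ‖LinearMap.toContinuousLinearMap (Matrix.toEuclideanLin M)‖


private lemma lt_of_cond {k i j : ℕ} (h1 : i / 2^(k+1) = j / 2^(k+1))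
    (h2 : i / 2^k % 2 = 0) (h3 : j / 2^k % 2 = 1) : i < j := by
  have e1 : i / 2^(k+1) = i / 2^k / 2 := by rw [Nat.div_div_eq_div_mul, pow_succ]
  have e2 : j / 2^(k+1) = j / 2^k / 2 := by rw [Nat.div_div_eq_div_mul, pow_succ]
  have hij : i / 2^k + 1 = j / 2^k := by omega
  have d1 := Nat.div_add_mod i (2^k)
  have d2 := Nat.div_add_mod j (2^k)
  have m1 := Nat.mod_lt i (Nat.two_pow_pos k)
  have key : 2^k * (i / 2^k) + 2^k = 2^k * (j / 2^k) := by rw [← hij]; ring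
  omega

private lemma exists_level {L i j : ℕ} (hij : i < j) (hj : j < 2^L) :
    ∃ k < L, i / 2^(k+1) = j / 2^(k+1) ∧ i / 2^k % 2 = 0 ∧ j / 2^k % 2 = 1 := by
  classical
  set P : ℕ → Prop := fun k => i / 2^k ≠ j / 2^k with hP
  have h0 : P 0 := by simpa [hP] using Nat.ne_of_lt hij
  set k := Nat.findGreatest P L with hk
  have hkP : P k := Nat.findGreatest_spec (Nat.zero_le L) h0
  have hkL : k ≤ L := Nat.findGreatest_le L
  have hkne : k ≠ L := by
    intro h
    apply hkP
    rw [h, Nat.div_eq_of_lt (lt_trans hij hj), Nat.div_eq_of_lt hj]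
  have hklt : k < L := lt_of_le_of_ne hkL hkne
  have hnext : ¬ P (k+1) := Nat.findGreatest_is_greatest (Nat.lt_succ_self k) hklt
  have heq : i / 2^(k+1) = j / 2^(k+1) := not_not.mp hnext
  have e1 : i / 2^(k+1) = i / 2^k / 2 := by rw [Nat.div_div_eq_div_mul, pow_succ]
  have e2 : j / 2^(k+1) = j / 2^k / 2 := by rw [Nat.div_div_eq_div_mul, pow_succ]
  have hle : i / 2^k ≤ j / 2^k := Nat.div_le_div_right hij.le
  have hne : i / 2^k ≠ j / 2^k := hkP
  exact ⟨k, hklt, heq, by omega, by omega⟩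

private lemma level_unique {k k' i j : ℕ} (hkk : k < k')
    (h1 : i / 2^(k+1) = j / 2^(k+1)) (h2' : i / 2^k' % 2 = 0) (h3' : j / 2^k' % 2 = 1) :
    False := by
  have hk' : k' = (k+1) + (k' - k - 1) := by omega
  have : i / 2^k' = j / 2^k' := by
    rw [hk', pow_add, ← Nat.div_div_eq_div_mul, ← Nat.div_div_eq_div_mul, h1]
  omega


private lemma euclid_apply {n : ℕ} (M : Matrix (Fin n) (Fin n) ℝ)
    (x : EuclideanSpace ℝ (Fin n)) (i : Fin n) :
    (LinearMap.toContinuousLinearMap (Matrix.toEuclideanLin M)) x i = ∑ j, M i j * x j := by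
  simp [Matrix.toEuclideanLin_apply, Matrix.mulVec, dotProduct]

private lemma norm_sq_eq {n : ℕ} (y : EuclideanSpace ℝ (Fin n)) : ‖y‖^2 = ∑ i, (y i)^2 := by
  rw [EuclideanSpace.norm_eq, Real.sq_sqrt (by positivity)]
  simp [sq_abs]

lemma blockBound {n : ℕ} (M : Matrix (Fin n) (Fin n) ℝ) (f g : Fin n → ℕ)
    (a b : Fin n → Bool) :
    specNorm (Matrix.of fun i j => if f i = g j ∧ a i ∧ b j then M i j else 0) ≤ specNorm M := by
  set N : Matrix (Fin n) (Fin n) ℝ :=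
    Matrix.of (fun i j => if f i = g j ∧ a i ∧ b j then M i j else 0) with hN
  show specNorm N ≤ specNorm M
  unfold specNorm
  apply ContinuousLinearMap.opNorm_le_bound _ (norm_nonneg _)
  intro x
  set C : ℝ := ‖LinearMap.toContinuousLinearMap (Matrix.toEuclideanLin M)‖ with hC
  have hC0 : (0:ℝ) ≤ C := norm_nonneg _
  -- the pieces of x
  set xp : ℕ → EuclideanSpace ℝ (Fin n) :=
    fun p => WithLp.toLp 2 (fun j => if b j ∧ g j = p then x j else 0 : Fin n → ℝ) with hxp
  set T := LinearMap.toContinuousLinearMap (Matrix.toEuclideanLin M) with hT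
  set s : Finset (Fin n) := Finset.univ.filter (fun i => a i) with hs
  set S : Finset ℕ := s.image f with hSdef
  have key : ‖(LinearMap.toContinuousLinearMap (Matrix.toEuclideanLin N)) x‖^2 ≤ (C * ‖x‖)^2 := by
    rw [norm_sq_eq]
    have step1 : ∀ i : Fin n,
        ((LinearMap.toContinuousLinearMap (Matrix.toEuclideanLin N)) x i)^2
          = if a i then ((T (xp (f i))) i)^2 else 0 := by
      intro i
      rw [euclid_apply, euclid_apply]
      by_cases ha : a i
      · simp only [ha, if_true]
        congr 1
        apply Finset.sum_congr rfl
        intro j _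
        simp only [hN, Matrix.of_apply, hxp]
        by_cases hb : b j
        · by_cases hfg : f i = g j
          · simp [hb, hfg, ha]
          · simp only [hb, hfg, ha, false_and, and_false, if_false, true_and, and_true]
            rw [if_neg (Ne.symm hfg)]
            ring
        · simp [hb]
      · simp only [ha]
        rw [if_neg (by simp)]
        have : ∀ j, N i j * x j = 0 := by
          intro j; simp [hN, ha]
        rw [Finset.sum_congr rfl (fun j _ => this j), Finset.sum_const_zero]
        norm_num
    calc ∑ i, ((LinearMap.toContinuousLinearMap (Matrix.toEuclideanLin N)) x i)^2
        = ∑ i ∈ s, ((T (xp (f i))) i)^2 := by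
          rw [Finset.sum_congr rfl (fun i _ => step1 i), ← Finset.sum_filter]
      _ = ∑ p ∈ S, ∑ i ∈ s.filter (fun i => f i = p), ((T (xp (f i))) i)^2 := by
          rw [Finset.sum_fiberwise_of_maps_to (fun i hi => Finset.mem_image_of_mem f hi)]
      _ = ∑ p ∈ S, ∑ i ∈ s.filter (fun i => f i = p), ((T (xp p)) i)^2 := by
          apply Finset.sum_congr rfl; intro p _
          apply Finset.sum_congr rfl; intro i hi
          rw [(Finset.mem_filter.mp hi).2]
      _ ≤ ∑ p ∈ S, ∑ i, ((T (xp p)) i)^2 := by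
          apply Finset.sum_le_sum; intro p _
          exact Finset.sum_le_sum_of_subset_of_nonneg (Finset.subset_univ _)
            (fun i _ _ => by positivity)
      _ = ∑ p ∈ S, ‖T (xp p)‖^2 := by
          apply Finset.sum_congr rfl; intro p _; rw [norm_sq_eq]
      _ ≤ ∑ p ∈ S, (C * ‖xp p‖)^2 := by
          apply Finset.sum_le_sum; intro p _
          exact pow_le_pow_left₀ (norm_nonneg _) (T.le_opNorm _) 2
      _ = C^2 * ∑ p ∈ S, ‖xp p‖^2 := by
          rw [Finset.mul_sum]; apply Finset.sum_congr rfl; intro p _; ring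
      _ ≤ C^2 * ‖x‖^2 := by
          apply mul_le_mul_of_nonneg_left _ (by positivity)
          rw [norm_sq_eq]
          have hxpn : ∀ p, ‖xp p‖^2 = ∑ j, if b j ∧ g j = p then (x j)^2 else 0 := by
            intro p; rw [norm_sq_eq]
            apply Finset.sum_congr rfl; intro j _
            by_cases h : b j ∧ g j = p <;> simp [hxp, h]
          calc ∑ p ∈ S, ‖xp p‖^2
              = ∑ j, ∑ p ∈ S, (if b j ∧ g j = p then (x j)^2 else 0) := by
                rw [Finset.sum_congr rfl (fun p _ => hxpn p), Finset.sum_comm]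
            _ ≤ ∑ j, (x j)^2 := by
                apply Finset.sum_le_sum; intro j _
                by_cases hb : b j
                · simp only [hb, true_and]
                  rw [Finset.sum_ite_eq S (g j) (fun _ => (x j)^2)]
                  split <;> [exact le_refl _; positivity]
                · simp [hb]; positivity
      _ = (C * ‖x‖)^2 := by ring
  have := Real.sqrt_le_sqrt key
  rwa [Real.sqrt_sq (norm_nonneg _), Real.sqrt_sq (by positivity)] at this

/-- Upper-triangular truncation: keep entries with `i ≤ j`, set the rest to zero. -/
def triu {n : ℕ} (M : Matrix (Fin n) (Fin n) ℝ) : Matrix (Fin n) (Fin n) ℝ :=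
  Matrix.of fun i j => if i ≤ j then M i j else 0

/-- `‖𝒰(M)‖₂ ≤ (⌈log₂ n⌉ + 1) ‖M‖₂`. -/
theorem stmt_6 (n : ℕ) (M : Matrix (Fin n) (Fin n) ℝ) :
    specNorm (triu M) ≤ ((⌈Real.logb 2 (n : ℝ)⌉ : ℝ) + 1) * specNorm M := by
  classical
  set L := Nat.clog 2 n with hL
  have hnL : n ≤ 2 ^ L := Nat.le_pow_clog one_lt_two n
  set D : Matrix (Fin n) (Fin n) ℝ :=
    Matrix.of (fun i j => if ((i:ℕ) = (j:ℕ)) ∧ (true : Bool) ∧ (true : Bool)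
      then M i j else 0) with hD
  set N : ℕ → Matrix (Fin n) (Fin n) ℝ := fun k =>
    Matrix.of (fun i j => if ((i:ℕ)/2^(k+1) = (j:ℕ)/2^(k+1))
        ∧ (decide ((i:ℕ)/2^k % 2 = 0) : Bool) ∧ (decide ((j:ℕ)/2^k % 2 = 1) : Bool)
      then M i j else 0) with hN
  have hDij : ∀ i j : Fin n, D i j = if (i:ℕ) = (j:ℕ) then M i j else 0 := by
    intro i j
    show (if ((i:ℕ) = (j:ℕ)) ∧ (true : Bool) ∧ (true : Bool) then M i j else 0) = _
    simp
  have hNij : ∀ (k : ℕ) (i j : Fin n), N k i j =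
      if ((i:ℕ)/2^(k+1) = (j:ℕ)/2^(k+1)) ∧ (i:ℕ)/2^k % 2 = 0 ∧ (j:ℕ)/2^k % 2 = 1
      then M i j else 0 := by
    intro k i j
    show (if ((i:ℕ)/2^(k+1) = (j:ℕ)/2^(k+1))
        ∧ (decide ((i:ℕ)/2^k % 2 = 0) : Bool) ∧ (decide ((j:ℕ)/2^k % 2 = 1) : Bool)
      then M i j else 0) = _
    simp
  have hdecomp : triu M = D + ∑ k ∈ Finset.range L, N k := by
    ext i j
    rw [Matrix.add_apply, Matrix.sum_apply]
    rcases lt_trichotomy (i : ℕ) (j : ℕ) with hij | hij | hij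
    · have htriu : triu M i j = M i j := by
        show (if i ≤ j then M i j else 0) = M i j
        exact if_pos (Fin.le_def.mpr (Nat.le_of_lt hij))
      obtain ⟨k₀, hk₀L, hq, h0, h1⟩ := exists_level hij (lt_of_lt_of_le j.isLt hnL)
      rw [htriu, hDij, if_neg (Nat.ne_of_lt hij), Finset.sum_eq_single k₀]
      · rw [hNij, if_pos ⟨hq, h0, h1⟩, zero_add]
      · intro k hk hkne
        rw [hNij, if_neg]
        rintro ⟨hq', h0', h1'⟩
        rcases Nat.lt_or_ge k k₀ with h | h
        · exact level_unique h hq' h0 h1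
        · exact level_unique (lt_of_le_of_ne h (Ne.symm hkne)) hq h0' h1'
      · intro h; exact absurd (Finset.mem_range.mpr hk₀L) h
    · have htriu : triu M i j = M i j := by
        show (if i ≤ j then M i j else 0) = M i j
        exact if_pos (Fin.le_def.mpr (Nat.le_of_eq hij))
      rw [htriu, hDij, if_pos hij]
      have : ∀ k ∈ Finset.range L, N k i j = 0 := by
        intro k hk
        rw [hNij, if_neg]
        rintro ⟨-, h0, h1⟩
        rw [hij] at h0
        omega
      rw [Finset.sum_congr rfl this, Finset.sum_const_zero, add_zero]
    · have htriu : triu M i j = 0 := by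
        show (if i ≤ j then M i j else 0) = 0
        exact if_neg (fun hc => absurd (Fin.le_def.mp hc) (by omega))
      rw [htriu, hDij, if_neg (by omega)]
      have : ∀ k ∈ Finset.range L, N k i j = 0 := by
        intro k hk
        rw [hNij, if_neg]
        rintro ⟨hq, h0, h1⟩
        exact absurd (lt_of_cond hq h0 h1) (by omega)
      rw [Finset.sum_congr rfl this, Finset.sum_const_zero, add_zero]
  have hsum : specNorm (triu M) ≤ specNorm D + ∑ k ∈ Finset.range L, specNorm (N k) := by
    rw [hdecomp]
    unfold specNorm
    rw [map_add, map_add, map_sum, map_sum]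
    exact (norm_add_le _ _).trans (by
      gcongr
      exact norm_sum_le _ _)
  have hDle : specNorm D ≤ specNorm M :=
    blockBound M (fun i => (i:ℕ)) (fun j => (j:ℕ)) (fun _ => true) (fun _ => true)
  have hNle : ∀ k, specNorm (N k) ≤ specNorm M := fun k =>
    blockBound M (fun i => (i:ℕ)/2^(k+1)) (fun j => (j:ℕ)/2^(k+1))
      (fun i => decide ((i:ℕ)/2^k % 2 = 0)) (fun j => decide ((j:ℕ)/2^k % 2 = 1))
  have hM0 : 0 ≤ specNorm M := norm_nonneg _
  have hmain : specNorm (triu M) ≤ ((L : ℝ) + 1) * specNorm M := by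
    calc specNorm (triu M) ≤ specNorm D + ∑ k ∈ Finset.range L, specNorm (N k) := hsum
      _ ≤ specNorm M + ∑ _k ∈ Finset.range L, specNorm M :=
          add_le_add hDle (Finset.sum_le_sum fun k _ => hNle k)
      _ = ((L : ℝ) + 1) * specNorm M := by
          rw [Finset.sum_const, Finset.card_range, nsmul_eq_mul]
          ring
  have hceil : (⌈Real.logb 2 (n : ℝ)⌉ : ℝ) = (L : ℝ) := by
    rw [show ((2:ℝ) = ((2:ℕ):ℝ)) by norm_num, Real.ceil_logb_natCast (Nat.cast_nonneg n),
      Int.clog_natCast]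
    push_cast
    rfl
  rw [hceil]
  exact hmain
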